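/- There is no nonzero complex number λ with 0 < m < n satisfying λ^m = 1 − m/n and λ^n = 1 − n/m simultaneously. -/

import Mathlib

/-- There is no nonzero complex `λ` with `0 < m < n` satisfying both
`λ^m = 1 - m/n` and `λ^n = 1 - n/m`. -/
theorem stmt_2 (m n : ℕ) (hm : 0 < m) (hmn : m < n) :
    ¬ ∃ l : ℂ, l ≠ 0 ∧ l ^ m = 1 - (m : ℂ) / (n : ℂ) ∧
      l ^ n = 1 - (n : ℂ) / (m : ℂ) := by
  rintro ⟨l, hl, h1, h2⟩
  set M : ℝ := (m : ℝ) with hM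
  set N : ℝ := (n : ℝ) with hN
  have hM0 : 0 < M := Nat.cast_pos.mpr hm
  have hMN : M < N := Nat.cast_lt.mpr hmn
  have hN0 : 0 < N := lt_trans hM0 hMN
  set r : ℝ := ‖l‖ with hr
  have hr0 : 0 < r := by
    simpa [hr] using (norm_pos_iff.mpr hl)
  -- abs of first equation
  have e1 : r ^ m = 1 - M / N := by
    have : (1 - (m : ℂ) / (n : ℂ)) = ((1 - M / N : ℝ) : ℂ) := by
      push_cast [hM, hN]; ring
    have habs : ‖l ^ m‖ = |1 - M / N| := by
      rw [h1, this, Complex.norm_real, Real.norm_eq_abs]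
    rw [norm_pow] at habs
    rw [habs, abs_of_nonneg]
    have : M / N < 1 := (div_lt_one hN0).mpr hMN
    linarith
  have e2 : r ^ n = N / M - 1 := by
    have : (1 - (n : ℂ) / (m : ℂ)) = ((1 - N / M : ℝ) : ℂ) := by
      push_cast [hM, hN]; ring
    have habs : ‖l ^ n‖ = |1 - N / M| := by
      rw [h2, this, Complex.norm_real, Real.norm_eq_abs]
    rw [norm_pow] at habs
    rw [habs, abs_of_nonpos]
    · ring
    have : 1 < N / M := (one_lt_div hM0).mpr hMN
    linarith
  have hr1 : r < 1 := by
    by_contra h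
    push_neg at h
    have : (1:ℝ) ≤ r ^ m := one_le_pow₀ h
    have hdiv : 0 < M / N := div_pos hM0 hN0
    rw [e1] at this
    linarith
  have hlt : r ^ n < r ^ m := pow_lt_pow_right_of_lt_one₀ hr0 hr1 hmn
  rw [e1, e2] at hlt
  have hM' : M ≠ 0 := ne_of_gt hM0
  have hN' : N ≠ 0 := ne_of_gt hN0
  rw [div_sub' hM', sub_div' hN', div_lt_div_iff₀ hM0 hN0] at hlt
  nlinarith [sq_nonneg (N - M)]
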